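/- arXiv:2508.07591 — 2 statements merged into one kernel-verified Lean document; each statement's English description precedes it below -/
import Mathlib

section
/- Let T be a self-adjoint operator on a finite-dimensional real inner product space V of dimension N, with eigenvalues μ_1 ≤ ⋯ ≤ μ_N (with multiplicity). Suppose all μ_j are nonzero, and denote by λ_k the k-th smallest positive eigenvalue (assuming at least k positive eigenvalues exist). Then 1/λ_k = inf over (k−1)-dimensional subspaces W of V of sup over nonzero v ⟂ W of ⟨v, T v⟩ / ⟨T v, T v⟩. -/
open scoped RealInnerProductSpace

open Module Submodule in
theorem stmt_10 {V : Type*} [NormedAddCommGroup V] [InnerProductSpace ℝ V]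
    [FiniteDimensional ℝ V] {N k : ℕ} (hk : 1 ≤ k)
    (T : V →ₗ[ℝ] V) (hT : T.IsSymmetric)
    (μ : Fin N → ℝ) (hmono : Monotone μ)
    (b : OrthonormalBasis (Fin N) ℝ V)
    (heig : ∀ i, T (b i) = μ i • b i)
    (hne : ∀ i, μ i ≠ 0)
    (j : Fin N) (hjpos : 0 < μ j)
    (hcount : Set.ncard {i : Fin N | 0 < μ i ∧ i < j} = k - 1) :
    1 / μ j =
      sInf {s : ℝ | ∃ W : Submodule ℝ V, Module.finrank ℝ W = k - 1 ∧
        s = sSup {r : ℝ | ∃ v : V, v ≠ 0 ∧ v ∈ Wᗮ ∧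
          r = ⟪v, T v⟫ / ⟪T v, T v⟫}} := by
  classical
  -- coordinate computation
  have hcT : ∀ (v : V) (i : Fin N), ⟪b i, T v⟫ = μ i * ⟪b i, v⟫ := by
    intro v i
    rw [← hT (b i) v, heig i, real_inner_smul_left]
  have hA : ∀ v : V, ⟪v, T v⟫ = ∑ i, μ i * ⟪b i, v⟫ ^ 2 := by
    intro v
    rw [← b.sum_inner_mul_inner v (T v)]
    refine Finset.sum_congr rfl fun i _ => ?_
    rw [hcT, real_inner_comm]; ring
  have hB : ∀ v : V, ⟪T v, T v⟫ = ∑ i, (μ i) ^ 2 * ⟪b i, v⟫ ^ 2 := by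
    intro v
    rw [← b.sum_inner_mul_inner (T v) (T v)]
    refine Finset.sum_congr rfl fun i _ => ?_
    rw [hcT, real_inner_comm, hcT]; ring
  have hBpos : ∀ v : V, v ≠ 0 → 0 < ⟪T v, T v⟫ := by
    intro v hv
    obtain ⟨i₀, hi₀⟩ : ∃ i, ⟪b i, v⟫ ≠ 0 := by
      by_contra h
      push_neg at h
      apply hv
      rw [← b.sum_repr v]
      simp only [b.repr_apply_apply]
      simp [h]
    rw [hB]
    refine Finset.sum_pos' (fun i _ => by positivity) ⟨i₀, Finset.mem_univ i₀, ?_⟩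
    exact mul_pos (pow_two_pos_of_ne_zero (hne i₀)) (pow_two_pos_of_ne_zero hi₀)
  -- a uniform upper bound for all Rayleigh quotients
  obtain ⟨C, hC⟩ : ∃ C : ℝ, ∀ i, μ i ≤ μ i ^ 2 * C := by
    refine ⟨∑ i, |μ i|⁻¹, fun i => ?_⟩
    have habs : μ i ^ 2 * |μ i|⁻¹ = |μ i| := by
      rw [sq, ← abs_mul_abs_self, mul_inv_cancel_right₀ (abs_ne_zero.mpr (hne i))]
    calc μ i ≤ |μ i| := le_abs_self _
      _ = μ i ^ 2 * |μ i|⁻¹ := habs.symm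
      _ ≤ μ i ^ 2 * ∑ i', |μ i'|⁻¹ := by
          refine mul_le_mul_of_nonneg_left ?_ (sq_nonneg _)
          exact Finset.single_le_sum (f := fun i' => |μ i'|⁻¹) (fun i' _ => by positivity) (Finset.mem_univ i)
  have hub : ∀ (W : Submodule ℝ V) (r : ℝ),
      r ∈ {r : ℝ | ∃ v : V, v ≠ 0 ∧ v ∈ Wᗮ ∧ r = ⟪v, T v⟫ / ⟪T v, T v⟫} → r ≤ C := by
    rintro W r ⟨v, hv, -, rfl⟩
    rw [div_le_iff₀ (hBpos v hv), hA, hB, Finset.mul_sum]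
    refine Finset.sum_le_sum fun i _ => ?_
    have := mul_le_mul_of_nonneg_right (hC i) (sq_nonneg ⟪b i, v⟫)
    nlinarith [this]
  -- the index sets
  set F : Finset (Fin N) := Finset.univ.filter (fun i => 0 < μ i ∧ i < j) with hF
  have hFcard : F.card = k - 1 := by
    have hset : {i : Fin N | 0 < μ i ∧ i < j} = ↑F := by ext i; simp [hF]
    rw [hset, Set.ncard_coe_finset] at hcount
    exact hcount
  have hjF : j ∉ F := by simp [hF]
  set P : Finset (Fin N) := insert j F with hP
  have hPcard : P.card = k := by
    rw [hP, Finset.card_insert_of_notMem hjF, hFcard]; omega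
  have hPmem : ∀ i ∈ P, 0 < μ i ∧ μ i ≤ μ j := by
    intro i hi
    rw [hP, Finset.mem_insert] at hi
    rcases hi with rfl | hi
    · exact ⟨hjpos, le_refl _⟩
    · rw [hF, Finset.mem_filter] at hi
      exact ⟨hi.2.1, hmono hi.2.2.le⟩
  -- spans of orthonormal subfamilies
  have hspan_rank : ∀ s : Finset (Fin N), finrank ℝ (span ℝ (b '' ↑s)) = s.card := by
    intro s
    have hon : Orthonormal ℝ (fun i : ↥(↑s : Set (Fin N)) => b i) :=
      b.orthonormal.comp _ Subtype.val_injective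
    have himg : b '' ↑s = Set.range (fun i : ↥(↑s : Set (Fin N)) => b i) := by
      rw [Set.image_eq_range]
    rw [himg, finrank_span_eq_card hon.linearIndependent]
    exact Fintype.card_coe s
  have hcoord0 : ∀ (s : Finset (Fin N)) (v : V), v ∈ span ℝ (b '' ↑s) →
      ∀ i ∉ s, ⟪b i, v⟫ = 0 := by
    intro s v hv i hi
    have hle : span ℝ (b '' ↑s) ≤ (ℝ ∙ (b i))ᗮ := by
      rw [Submodule.span_le]
      rintro x ⟨p, hp, rfl⟩
      rw [SetLike.mem_coe, Submodule.mem_orthogonal_singleton_iff_inner_right]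
      exact b.orthonormal.2 (fun h => hi (by rw [h]; exact hp))
    exact Submodule.mem_orthogonal_singleton_iff_inner_right.mp (hle hv)
  -- lower bound : every element of the min-max set is ≥ 1/μ j
  have hlow : ∀ s ∈ {s : ℝ | ∃ W : Submodule ℝ V, Module.finrank ℝ W = k - 1 ∧
        s = sSup {r : ℝ | ∃ v : V, v ≠ 0 ∧ v ∈ Wᗮ ∧
          r = ⟪v, T v⟫ / ⟪T v, T v⟫}}, 1 / μ j ≤ s := by
    rintro s ⟨W, hWrank, rfl⟩
    have hUrank : finrank ℝ (span ℝ (b '' ↑P)) = k := by rw [hspan_rank, hPcard]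
    have hinter : 0 < finrank ℝ ↥(span ℝ (b '' ↑P) ⊓ Wᗮ) := by
      have h1 := Submodule.finrank_sup_add_finrank_inf_eq (span ℝ (b '' ↑P)) Wᗮ
      have h2 := Submodule.finrank_add_finrank_orthogonal W
      have h3 : finrank ℝ ↥(span ℝ (b '' ↑P) ⊔ Wᗮ) ≤ finrank ℝ V :=
        Submodule.finrank_le _
      rw [hWrank] at h2
      rw [hUrank] at h1
      omega
    haveI : Nontrivial ↥(span ℝ (b '' ↑P) ⊓ Wᗮ) := Module.finrank_pos_iff.mp hinter
    obtain ⟨x, hx⟩ := exists_ne (0 : ↥(span ℝ (b '' ↑P) ⊓ Wᗮ))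
    obtain ⟨v, hvmem⟩ := x
    have hv0 : v ≠ 0 := by
      simpa [Submodule.mk_eq_zero] using hx
    obtain ⟨hvU, hvW⟩ := Submodule.mem_inf.mp hvmem
    have hBv := hBpos v hv0
    have hABle : ⟪T v, T v⟫ ≤ μ j * ⟪v, T v⟫ := by
      rw [hA, hB, Finset.mul_sum]
      refine Finset.sum_le_sum fun i _ => ?_
      by_cases hi : i ∈ P
      · obtain ⟨h1, h2⟩ := hPmem i hi
        have h4 := mul_le_mul_of_nonneg_right
          (mul_le_mul_of_nonneg_right h2 h1.le) (sq_nonneg (⟪b i, v⟫ : ℝ))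
        nlinarith [h4]
      · rw [hcoord0 P v hvU i hi]; simp
    have hle : 1 / μ j ≤ ⟪v, T v⟫ / ⟪T v, T v⟫ := by
      rw [div_le_div_iff₀ hjpos hBv]
      linarith
    refine hle.trans (le_csSup ⟨C, fun r hr => hub W r hr⟩ ?_)
    exact ⟨v, hv0, hvW, rfl⟩
  -- the optimal subspace
  have hW₀rank : Module.finrank ℝ ↥(span ℝ (b '' ↑F)) = k - 1 := by
    rw [hspan_rank, hFcard]
  have hbj1 : ⟪b j, b j⟫ = 1 := by
    have := b.orthonormal.1 j
    rw [real_inner_self_eq_norm_sq, this]; norm_num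
  have hbjW : b j ∈ (span ℝ (b '' ↑F))ᗮ := by
    rw [Submodule.mem_orthogonal]
    intro u hu
    have hle : span ℝ (b '' ↑F) ≤ (ℝ ∙ (b j))ᗮ := by
      rw [Submodule.span_le]
      rintro x ⟨p, hp, rfl⟩
      rw [SetLike.mem_coe, Submodule.mem_orthogonal_singleton_iff_inner_left]
      exact b.orthonormal.2 (fun h => hjF (by rw [← h]; exact hp))
    exact Submodule.mem_orthogonal_singleton_iff_inner_left.mp (hle hu)
  have hbjr : (1 : ℝ) / μ j = ⟪b j, T (b j)⟫ / ⟪T (b j), T (b j)⟫ := by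
    have h0 : μ j ≠ 0 := hne j
    rw [heig j]
    simp only [real_inner_smul_left, real_inner_smul_right, hbj1, mul_one]
    rw [div_eq_div_iff h0 (mul_ne_zero h0 h0)]
    ring
  have hmem0 : (1 / μ j : ℝ) ∈ {r : ℝ | ∃ v : V, v ≠ 0 ∧ v ∈ (span ℝ (b '' ↑F))ᗮ ∧
      r = ⟪v, T v⟫ / ⟪T v, T v⟫} :=
    ⟨b j, b.orthonormal.ne_zero j, hbjW, hbjr⟩
  have hW₀sup : sSup {r : ℝ | ∃ v : V, v ≠ 0 ∧ v ∈ (span ℝ (b '' ↑F))ᗮ ∧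
      r = ⟪v, T v⟫ / ⟪T v, T v⟫} = 1 / μ j := by
    refine le_antisymm (csSup_le ⟨_, hmem0⟩ ?_)
      (le_csSup ⟨C, fun r hr => hub _ r hr⟩ hmem0)
    rintro r ⟨v, hv0, hvW, rfl⟩
    have hBv := hBpos v hv0
    have hc0 : ∀ i ∈ F, ⟪b i, v⟫ = 0 := by
      intro i hi
      refine Submodule.inner_right_of_mem_orthogonal ?_ hvW
      exact Submodule.subset_span ⟨i, hi, rfl⟩
    rw [div_le_div_iff₀ hBv hjpos, one_mul, hA, hB, Finset.sum_mul]
    refine Finset.sum_le_sum fun i _ => ?_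
    by_cases hci : (⟪b i, v⟫ : ℝ) = 0
    · rw [hci]; simp
    · have hiF : i ∉ F := fun h => hci (hc0 i h)
      rw [hF, Finset.mem_filter] at hiF
      push_neg at hiF
      have hiF' := hiF (Finset.mem_univ i)
      have hc2 : (0:ℝ) ≤ ⟪b i, v⟫ ^ 2 := sq_nonneg _
      rcases lt_or_gt_of_ne (hne i) with hneg | hpos
      · calc μ i * ⟪b i, v⟫ ^ 2 * μ j ≤ 0 := by
              have h5 : μ i * ⟪b i, v⟫ ^ 2 ≤ 0 :=
                mul_nonpos_iff.mpr (Or.inr ⟨hneg.le, hc2⟩)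
              exact mul_nonpos_iff.mpr (Or.inr ⟨h5, hjpos.le⟩)
          _ ≤ μ i ^ 2 * ⟪b i, v⟫ ^ 2 := mul_nonneg (sq_nonneg _) hc2
      · have hij : μ j ≤ μ i := hmono (hiF' hpos)
        have h4 := mul_le_mul_of_nonneg_right
          (mul_le_mul_of_nonneg_right hij hpos.le) hc2
        nlinarith [h4]
  have hmemS : (1 / μ j : ℝ) ∈ {s : ℝ | ∃ W : Submodule ℝ V, Module.finrank ℝ W = k - 1 ∧
        s = sSup {r : ℝ | ∃ v : V, v ≠ 0 ∧ v ∈ Wᗮ ∧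
          r = ⟪v, T v⟫ / ⟪T v, T v⟫}} :=
    ⟨span ℝ (b '' ↑F), hW₀rank, hW₀sup.symm⟩
  exact le_antisymm (le_csInf ⟨_, hmemS⟩ hlow) (csInf_le ⟨1 / μ j, hlow⟩ hmemS)
end

section
/- Let V be a finite-dimensional real inner product space, D a self-adjoint invertible operator on V, and A₁, A₂ self-adjoint positive-definite operators on V with A₁ ≥ A₂. For each k, let λ_k(A_i) denote the k-th smallest positive eigenvalue (with multiplicity) of A_i⁻¹D, characterized by 1/λ_k(A_i) = inf over k-dimensional subspaces W of sup over nonzero v ∈ W of ⟨v, D v⟩ / ⟨A_i⁻¹ D v, D v⟩. Then λ_k(A₁) ≤ λ_k(A₂) whenever both are defined. -/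
open scoped RealInnerProductSpace

section auxSec
variable {V : Type*} [NormedAddCommGroup V] [InnerProductSpace ℝ V] [FiniteDimensional ℝ V]

/-- Positive definiteness of the inverse. -/
lemma aux_inv_pos (A B : V →ₗ[ℝ] V) (hApos : ∀ v : V, v ≠ 0 → 0 < ⟪A v, v⟫)
    (hAB : A ∘ₗ B = LinearMap.id) {w : V} (hw : w ≠ 0) : 0 < ⟪B w, w⟫ := by
  have hABw : A (B w) = w := by
    have := LinearMap.ext_iff.mp hAB w
    simpa using this
  have hBw : B w ≠ 0 := by
    intro h
    apply hw
    rw [← hABw, h, map_zero]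
  calc (0:ℝ) < ⟪A (B w), B w⟫ := hApos _ hBw
    _ = ⟪B w, w⟫ := by rw [hABw, real_inner_comm]

/-- Monotonicity of the inverse. -/
lemma aux_inv_mono (A₁ A₂ B₁ B₂ : V →ₗ[ℝ] V) (hA₂ : A₂.IsSymmetric)
    (hA₂pos : ∀ v : V, v ≠ 0 → 0 < ⟪A₂ v, v⟫)
    (hB₁ : A₁ ∘ₗ B₁ = LinearMap.id) (hB₂ : A₂ ∘ₗ B₂ = LinearMap.id)
    (hle : ∀ v : V, 0 ≤ ⟪(A₁ - A₂) v, v⟫) (w : V) : ⟪B₁ w, w⟫ ≤ ⟪B₂ w, w⟫ := by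
  set u := B₁ w with hu
  set u' := B₂ w with hu'
  have h1 : A₁ u = w := by have := LinearMap.ext_iff.mp hB₁ w; simpa using this
  have h2 : A₂ u' = w := by have := LinearMap.ext_iff.mp hB₂ w; simpa using this
  have hq : 0 ≤ ⟪A₂ (u - u'), u - u'⟫ := by
    rcases eq_or_ne (u - u') 0 with h | h
    · rw [h]; simp
    · exact (hA₂pos _ h).le
  have hexp : ⟪A₂ (u - u'), u - u'⟫
      = ⟪A₂ u, u⟫ - ⟪A₂ u, u'⟫ - ⟪A₂ u', u⟫ + ⟪A₂ u', u'⟫ := by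
    rw [map_sub, inner_sub_left, inner_sub_right, inner_sub_right]; ring
  have hs1 : ⟪A₂ u, u'⟫ = ⟪u, w⟫ := by rw [hA₂ u u', h2]
  have hs2 : ⟪A₂ u', u⟫ = ⟪w, u⟫ := by rw [h2]
  have hs3 : ⟪A₂ u', u'⟫ = ⟪w, u'⟫ := by rw [h2]
  have hcmp : 0 ≤ ⟪A₁ u, u⟫ - ⟪A₂ u, u⟫ := by
    have := hle u
    rwa [LinearMap.sub_apply, inner_sub_left] at this
  have h4 : ⟪A₁ u, u⟫ = ⟪w, u⟫ := by rw [h1]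
  have c1 : ⟪u, w⟫ = ⟪w, u⟫ := real_inner_comm _ _
  have c2 : ⟪u', w⟫ = ⟪w, u'⟫ := real_inner_comm _ _
  have : ⟪u, w⟫ ≤ ⟪u', w⟫ := by
    rw [hexp, hs1, hs2, hs3] at hq
    linarith
  exact this

/-- Quadratic lower bound for a positive definite form, on a nontrivial space. -/
lemma aux_quad_lower (B : V →ₗ[ℝ] V) [Nontrivial V]
    (hpos : ∀ w : V, w ≠ 0 → 0 < ⟪B w, w⟫) :
    ∃ m : ℝ, 0 < m ∧ ∀ w : V, m * ‖w‖ ^ 2 ≤ ⟪B w, w⟫ := by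
  have hc : Continuous fun w : V => ⟪B w, w⟫ :=
    Continuous.inner (B.continuous_of_finiteDimensional) continuous_id
  have hsne : (Metric.sphere (0 : V) 1).Nonempty :=
    NormedSpace.sphere_nonempty.mpr zero_le_one
  obtain ⟨x, hx, hmin⟩ :=
    (isCompact_sphere (0 : V) 1).exists_isMinOn hsne hc.continuousOn
  have hx1 : ‖x‖ = 1 := mem_sphere_zero_iff_norm.mp hx
  have hxne : x ≠ 0 := by intro h; rw [h, norm_zero] at hx1; norm_num at hx1
  refine ⟨⟪B x, x⟫, hpos x hxne, fun w => ?_⟩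
  rcases eq_or_ne w 0 with h | h
  · simp [h]
  · have hwpos : (0:ℝ) < ‖w‖ := norm_pos_iff.mpr h
    set u := ‖w‖⁻¹ • w with hud
    have hun : ‖u‖ = 1 := by
      rw [hud, norm_smul, norm_inv, norm_norm, inv_mul_cancel₀ hwpos.ne']
    have humem : u ∈ Metric.sphere (0 : V) 1 := mem_sphere_zero_iff_norm.mpr hun
    have hmu : ⟪B x, x⟫ ≤ ⟪B u, u⟫ := hmin humem
    have hval : ⟪B u, u⟫ = ‖w‖⁻¹ * (‖w‖⁻¹ * ⟪B w, w⟫) := by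
      rw [hud, map_smul, real_inner_smul_left, real_inner_smul_right]
    rw [hval] at hmu
    have h2 : (0:ℝ) < ‖w‖ ^ 2 := by positivity
    have h3 := mul_le_mul_of_nonneg_right hmu h2.le
    have h4 : ‖w‖⁻¹ * (‖w‖⁻¹ * ⟪B w, w⟫) * ‖w‖ ^ 2 = ⟪B w, w⟫ := by
      rw [pow_two]
      field_simp
    rw [h4] at h3
    linarith

/-- Lower norm bound for a bijective map. -/
lemma aux_norm_bound (D : V →ₗ[ℝ] V) (hDinv : Function.Bijective D) :
    ∃ C : ℝ, 0 ≤ C ∧ ∀ v : V, ‖v‖ ≤ C * ‖D v‖ := by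
  let e : V ≃ₗ[ℝ] V := LinearEquiv.ofBijective D hDinv
  let e' := e.toContinuousLinearEquiv
  refine ⟨‖(e'.symm : V →L[ℝ] V)‖, norm_nonneg _, fun v => ?_⟩
  have : e'.symm (e' v) = v := e'.symm_apply_apply v
  calc ‖v‖ = ‖e'.symm (e' v)‖ := by rw [this]
    _ ≤ ‖(e'.symm : V →L[ℝ] V)‖ * ‖e' v‖ := (e'.symm : V →L[ℝ] V).le_opNorm _
    _ = ‖(e'.symm : V →L[ℝ] V)‖ * ‖D v‖ := rfl

end auxSec

theorem stmt_12 {V : Type*} [NormedAddCommGroup V] [InnerProductSpace ℝ V]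
    [FiniteDimensional ℝ V] (k : ℕ)
    (D : V →ₗ[ℝ] V) (hD : D.IsSymmetric)
    (hDinv : Function.Bijective D)
    (A₁ A₂ B₁ B₂ : V →ₗ[ℝ] V)
    (hA₁ : A₁.IsSymmetric) (hA₂ : A₂.IsSymmetric)
    (hA₁pos : ∀ v : V, v ≠ 0 → 0 < ⟪A₁ v, v⟫)
    (hA₂pos : ∀ v : V, v ≠ 0 → 0 < ⟪A₂ v, v⟫)
    (hB₁ : A₁ ∘ₗ B₁ = LinearMap.id ∧ B₁ ∘ₗ A₁ = LinearMap.id)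
    (hB₂ : A₂ ∘ₗ B₂ = LinearMap.id ∧ B₂ ∘ₗ A₂ = LinearMap.id)
    (hle : ∀ v : V, 0 ≤ ⟪(A₁ - A₂) v, v⟫)
    (lam₁ lam₂ : ℝ) (hlam₁ : 0 < lam₁) (hlam₂ : 0 < lam₂)
    (hchar₁ : 1 / lam₁ =
      sInf {s : ℝ | ∃ W : Submodule ℝ V, Module.finrank ℝ W = k ∧
        s = sSup {r : ℝ | ∃ v : V, v ≠ 0 ∧ v ∈ W ∧
          r = ⟪v, D v⟫ / ⟪B₁ (D v), D v⟫}})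
    (hchar₂ : 1 / lam₂ =
      sInf {s : ℝ | ∃ W : Submodule ℝ V, Module.finrank ℝ W = k ∧
        s = sSup {r : ℝ | ∃ v : V, v ≠ 0 ∧ v ∈ W ∧
          r = ⟪v, D v⟫ / ⟪B₂ (D v), D v⟫}}) :
    lam₁ ≤ lam₂ := by
  have hB₁pos : ∀ w : V, w ≠ 0 → 0 < ⟪B₁ w, w⟫ :=
    fun w hw => aux_inv_pos A₁ B₁ hA₁pos hB₁.1 hw
  have hB₂pos : ∀ w : V, w ≠ 0 → 0 < ⟪B₂ w, w⟫ :=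
    fun w hw => aux_inv_pos A₂ B₂ hA₂pos hB₂.1 hw
  have hmono : ∀ w : V, ⟪B₁ w, w⟫ ≤ ⟪B₂ w, w⟫ :=
    aux_inv_mono A₁ A₂ B₁ B₂ hA₂ hA₂pos hB₁.1 hB₂.1 hle
  obtain ⟨C, hC0, hC⟩ := aux_norm_bound D hDinv
  have hDne : ∀ v : V, v ≠ 0 → D v ≠ 0 := by
    intro v hv h
    exact hv (hDinv.injective (by rw [h, map_zero]))
  -- the inner (per-subspace) sets
  set E₁ : Submodule ℝ V → Set ℝ := fun W =>
    {r : ℝ | ∃ v : V, v ≠ 0 ∧ v ∈ W ∧ r = ⟪v, D v⟫ / ⟪B₁ (D v), D v⟫} with hE₁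
  set E₂ : Submodule ℝ V → Set ℝ := fun W =>
    {r : ℝ | ∃ v : V, v ≠ 0 ∧ v ∈ W ∧ r = ⟪v, D v⟫ / ⟪B₂ (D v), D v⟫} with hE₂
  set S₁ : Set ℝ := {s : ℝ | ∃ W : Submodule ℝ V, Module.finrank ℝ W = k ∧
      s = sSup (E₁ W)} with hS₁
  set S₂ : Set ℝ := {s : ℝ | ∃ W : Submodule ℝ V, Module.finrank ℝ W = k ∧
      s = sSup (E₂ W)} with hS₂
  have hchar₁' : 1 / lam₁ = sInf S₁ := hchar₁
  have hchar₂' : 1 / lam₂ = sInf S₂ := hchar₂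
  have h2pos : 0 < sInf S₂ := by
    rw [← hchar₂']
    positivity
  have hS₂ne : S₂.Nonempty := by
    by_contra h
    rw [Set.not_nonempty_iff_eq_empty.mp h, Real.sInf_empty] at h2pos
    exact lt_irrefl _ h2pos
  have hS₂bdd : BddBelow S₂ := by
    by_contra h
    rw [Real.sInf_of_not_bddBelow h] at h2pos
    exact lt_irrefl _ h2pos
  -- key step
  have key : ∀ W : Submodule ℝ V, Module.finrank ℝ W = k → sInf S₂ ≤ sSup (E₁ W) := by
    intro W hW
    have hmem₂ : sSup (E₂ W) ∈ S₂ := ⟨W, hW, rfl⟩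
    have hlow : sInf S₂ ≤ sSup (E₂ W) := csInf_le hS₂bdd hmem₂
    -- W must contain a nonzero vector
    obtain ⟨v₀, hv₀W, hv₀⟩ : ∃ v₀ ∈ W, v₀ ≠ (0:V) := by
      by_contra h
      push_neg at h
      have hempty : E₂ W = ∅ := by
        ext r
        simp only [hE₂, Set.mem_setOf_eq, Set.mem_empty_iff_false, iff_false]
        rintro ⟨v, hv, hvW, -⟩
        exact hv (h v hvW)
      rw [hempty, Real.sSup_empty] at hlow
      linarith
    haveI : Nontrivial V := ⟨⟨v₀, 0, hv₀⟩⟩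
    obtain ⟨m, hm, hmB⟩ := aux_quad_lower B₁ hB₁pos
    -- E₁ W is bounded above by C / m
    have hbdd₁ : ∀ r ∈ E₁ W, r ≤ C / m := by
      rintro r ⟨v, hv, hvW, rfl⟩
      have hDv := hDne v hv
      have hDvpos : (0:ℝ) < ‖D v‖ := norm_pos_iff.mpr hDv
      have hd : m * ‖D v‖ ^ 2 ≤ ⟪B₁ (D v), D v⟫ := hmB (D v)
      have hdpos : (0:ℝ) < ⟪B₁ (D v), D v⟫ := hB₁pos _ hDv
      have hnum : ⟪v, D v⟫ ≤ C * ‖D v‖ ^ 2 := by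
        calc ⟪v, D v⟫ ≤ ‖v‖ * ‖D v‖ := real_inner_le_norm _ _
          _ ≤ (C * ‖D v‖) * ‖D v‖ := by
              apply mul_le_mul_of_nonneg_right (hC v) hDvpos.le
          _ = C * ‖D v‖ ^ 2 := by ring
      calc ⟪v, D v⟫ / ⟪B₁ (D v), D v⟫ ≤ (C * ‖D v‖ ^ 2) / ⟪B₁ (D v), D v⟫ := by
            apply div_le_div_of_nonneg_right hnum hdpos.le -- check name
        _ ≤ (C * ‖D v‖ ^ 2) / (m * ‖D v‖ ^ 2) := by
            apply div_le_div_of_nonneg_left (by positivity) (by positivity) hd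
        _ = C / m := by
            rw [mul_div_mul_right _ _ (by positivity : (‖D v‖:ℝ) ^ 2 ≠ 0)]
    have hbdd₁' : BddAbove (E₁ W) := ⟨C / m, fun r hr => hbdd₁ r hr⟩
    by_cases hposc : ∃ v : V, v ≠ 0 ∧ v ∈ W ∧ 0 ≤ ⟪v, D v⟫
    · obtain ⟨v₁, hv₁, hv₁W, hnn⟩ := hposc
      have hr₁mem : ⟪v₁, D v₁⟫ / ⟪B₁ (D v₁), D v₁⟫ ∈ E₁ W := ⟨v₁, hv₁, hv₁W, rfl⟩
      have hr₁nn : 0 ≤ ⟪v₁, D v₁⟫ / ⟪B₁ (D v₁), D v₁⟫ :=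
        div_nonneg hnn (hB₁pos _ (hDne _ hv₁)).le
      have hr₁le : ⟪v₁, D v₁⟫ / ⟪B₁ (D v₁), D v₁⟫ ≤ sSup (E₁ W) := le_csSup hbdd₁' hr₁mem
      have hne2 : (E₂ W).Nonempty := ⟨_, ⟨v₁, hv₁, hv₁W, rfl⟩⟩
      have hsup : sSup (E₂ W) ≤ sSup (E₁ W) := by
        apply csSup_le hne2
        rintro r ⟨u, hu, huW, rfl⟩
        by_cases hnu : 0 ≤ ⟪u, D u⟫
        · have hd1 : (0:ℝ) < ⟪B₁ (D u), D u⟫ := hB₁pos _ (hDne _ hu)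
          have : ⟪u, D u⟫ / ⟪B₂ (D u), D u⟫ ≤ ⟪u, D u⟫ / ⟪B₁ (D u), D u⟫ :=
            div_le_div_of_nonneg_left hnu hd1 (hmono (D u))
          exact this.trans (le_csSup hbdd₁' ⟨u, hu, huW, rfl⟩)
        · push_neg at hnu
          have : ⟪u, D u⟫ / ⟪B₂ (D u), D u⟫ ≤ 0 :=
            div_nonpos_iff.mpr (Or.inr ⟨hnu.le, (hB₂pos _ (hDne _ hu)).le⟩)
          exact this.trans (hr₁nn.trans hr₁le)
      exact hlow.trans hsup
    · push_neg at hposc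
      exfalso
      have hne2 : (E₂ W).Nonempty := ⟨_, ⟨v₀, hv₀, hv₀W, rfl⟩⟩
      have hsup2 : sSup (E₂ W) ≤ 0 := by
        apply csSup_le hne2
        rintro r ⟨u, hu, huW, rfl⟩
        have hnu : ⟪u, D u⟫ < 0 := hposc u hu huW
        exact div_nonpos_iff.mpr (Or.inr ⟨hnu.le, (hB₂pos _ (hDne _ hu)).le⟩)
      linarith [hlow.trans hsup2]
  -- conclude
  have hS₁ne : S₁.Nonempty := by
    obtain ⟨s, W, hW, -⟩ := hS₂ne
    exact ⟨sSup (E₁ W), W, hW, rfl⟩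
  have hfin : sInf S₂ ≤ sInf S₁ := by
    apply le_csInf hS₁ne
    rintro s ⟨W, hW, rfl⟩
    exact key W hW
  rw [← hchar₁', ← hchar₂'] at hfin
  exact le_of_one_div_le_one_div hlam₂ hfin
end
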